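/- Let n ≥ 4 be a natural number and let Λ, Λ₀, B, C be real constants with C > 0. Define σ(t) = t²/(16C) + C for t ∈ ℝ, and for t > 0 define β(t) = t · (t² + 16C²)^{−(n−2)/2} · ( B − ∫₁^t (16C² + s²)^{(n−2)/2} · (16C·Λ₀ − Λ·(16C² + s²)) / (4s²) ds ). Then β is differentiable on (0, ∞) and for every t > 0 one has 2 β'(t) σ'(t) + 2 β(t) · ( (n−4) σ'(t)²/(2σ(t)) − 1/(4σ(t)) + σ''(t) ) − σ(t) Λ + Λ₀ = 0. -/

import Mathlib

/-- Verification (proof of Theorem 4.2) that the function `β̃` of formula (4.2)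
solves the ODE (4.27) with `σ(t) = t²/(16C) + C` on `(0, ∞)`. -/
theorem stmt2 (n : ℕ) (hn : 4 ≤ n) (Λ Λ₀ B C : ℝ) (hC : 0 < C)
    (σ β : ℝ → ℝ)
    (hσ : ∀ t : ℝ, σ t = t ^ 2 / (16 * C) + C)
    (hβ : ∀ t : ℝ, 0 < t →
      β t = t * (t ^ 2 + 16 * C ^ 2) ^ (-(((n : ℝ) - 2) / 2)) *
        (B - ∫ s in (1 : ℝ)..t,
          (16 * C ^ 2 + s ^ 2) ^ (((n : ℝ) - 2) / 2) *
            (16 * C * Λ₀ - Λ * (16 * C ^ 2 + s ^ 2)) / (4 * s ^ 2))) :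
    ∀ t : ℝ, 0 < t →
      DifferentiableAt ℝ β t ∧
      2 * deriv β t * deriv σ t
          + 2 * β t * (((n : ℝ) - 4) * (deriv σ t) ^ 2 / (2 * σ t)
              - 1 / (4 * σ t) + deriv (deriv σ) t)
          - σ t * Λ + Λ₀ = 0 := by
  have hC' : (C : ℝ) ≠ 0 := ne_of_gt hC
  have hσf : σ = fun t : ℝ => t ^ 2 / (16 * C) + C := funext hσ
  have hσd : ∀ x : ℝ, HasDerivAt σ (x / (8 * C)) x := by
    intro x
    rw [hσf]
    have h := ((hasDerivAt_pow 2 x).div_const (16 * C)).add_const C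
    refine h.congr_deriv ?_
    push_cast
    ring
  have hσ' : deriv σ = fun x : ℝ => x / (8 * C) := funext fun x => (hσd x).deriv
  have hσ'' : ∀ x : ℝ, deriv (deriv σ) x = 1 / (8 * C) := by
    intro x
    rw [hσ']
    have h := (hasDerivAt_id x).div_const (8 * C)
    simpa using h.deriv
  set p : ℝ := ((n : ℝ) - 2) / 2 with hp
  set g : ℝ → ℝ := fun s =>
    (16 * C ^ 2 + s ^ 2) ^ p * (16 * C * Λ₀ - Λ * (16 * C ^ 2 + s ^ 2)) / (4 * s ^ 2) with hg
  have hgcont : ContinuousOn g (Set.Ioi (0 : ℝ)) := by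
    apply ContinuousOn.div
    · apply ContinuousOn.mul
      · apply Continuous.continuousOn
        apply Continuous.rpow_const (by continuity)
        intro x; left; positivity
      · exact (Continuous.continuousOn (by continuity))
    · exact Continuous.continuousOn (by continuity)
    · intro x hx
      have hx' : (0 : ℝ) < x := hx
      positivity
  intro t ht
  have ht' : t ≠ 0 := ne_of_gt ht
  have hsub : Set.uIcc (1 : ℝ) t ⊆ Set.Ioi 0 := fun x hx =>
    lt_of_lt_of_le (lt_min one_pos ht) hx.1
  have hint : IntervalIntegrable g MeasureTheory.volume 1 t :=
    (hgcont.mono hsub).intervalIntegrable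
  have hmeas : StronglyMeasurableAtFilter g (nhds t) :=
    hgcont.stronglyMeasurableAtFilter isOpen_Ioi t ht
  have hcont : ContinuousAt g t := hgcont.continuousAt (isOpen_Ioi.mem_nhds ht)
  have hF : HasDerivAt (fun x => ∫ s in (1 : ℝ)..x, g s) (g t) t :=
    intervalIntegral.integral_hasDerivAt_right hint hmeas hcont
  have hFd : HasDerivAt (fun x => B - ∫ s in (1 : ℝ)..x, g s) (-(g t)) t := hF.const_sub B
  have hu : (0 : ℝ) < t ^ 2 + 16 * C ^ 2 := by positivity
  have hx2 : HasDerivAt (fun x : ℝ => x ^ 2 + 16 * C ^ 2) (2 * t) t := by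
    have := (hasDerivAt_pow 2 t).add_const (16 * C ^ 2)
    simpa using this
  have h2 : HasDerivAt (fun x : ℝ => (x ^ 2 + 16 * C ^ 2) ^ (-p))
      (2 * t * (-p) * (t ^ 2 + 16 * C ^ 2) ^ (-p - 1)) t :=
    hx2.rpow_const (Or.inl (ne_of_gt hu))
  have hfull : HasDerivAt
      (fun x => x * (x ^ 2 + 16 * C ^ 2) ^ (-p) * (B - ∫ s in (1 : ℝ)..x, g s))
      ((1 * (t ^ 2 + 16 * C ^ 2) ^ (-p) +
          t * (2 * t * (-p) * (t ^ 2 + 16 * C ^ 2) ^ (-p - 1))) *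
        (B - ∫ s in (1 : ℝ)..t, g s) +
        t * (t ^ 2 + 16 * C ^ 2) ^ (-p) * (-(g t))) t :=
    ((hasDerivAt_id t).mul h2).mul hFd
  have heq : β =ᶠ[nhds t]
      fun x => x * (x ^ 2 + 16 * C ^ 2) ^ (-p) * (B - ∫ s in (1 : ℝ)..x, g s) := by
    filter_upwards [isOpen_Ioi.mem_nhds ht] with x hx
    exact hβ x hx
  have hdiff : DifferentiableAt ℝ β t :=
    hfull.differentiableAt.congr_of_eventuallyEq heq
  refine ⟨hdiff, ?_⟩
  have hderiv : deriv β t =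
      (1 * (t ^ 2 + 16 * C ^ 2) ^ (-p) +
          t * (2 * t * (-p) * (t ^ 2 + 16 * C ^ 2) ^ (-p - 1))) *
        (B - ∫ s in (1 : ℝ)..t, g s) +
        t * (t ^ 2 + 16 * C ^ 2) ^ (-p) * (-(g t)) := by
    rw [heq.deriv_eq]; exact hfull.deriv
  set A : ℝ := (t ^ 2 + 16 * C ^ 2) ^ (-p) with hA_def
  have hA : (0 : ℝ) < A := Real.rpow_pos_of_pos hu _
  have hA' : A ≠ 0 := ne_of_gt hA
  have hE : (16 * C ^ 2 + t ^ 2) ^ p = A⁻¹ := by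
    rw [hA_def, add_comm (16 * C ^ 2), Real.rpow_neg (le_of_lt hu), inv_inv]
  have hA1 : (t ^ 2 + 16 * C ^ 2) ^ (-p - 1) = A / (t ^ 2 + 16 * C ^ 2) := by
    have h : (-p - 1 : ℝ) = -p + (-1) := by ring
    rw [hA_def, h, Real.rpow_add hu, Real.rpow_neg_one, div_eq_mul_inv]
  have hσt : t ^ 2 / (16 * C) + C ≠ 0 := by positivity
  have hu' : t ^ 2 + 16 * C ^ 2 ≠ 0 := ne_of_gt hu
  rw [hderiv, hσ'' t, hσ', hσ t, hβ t ht]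
  rw [← hA_def, hA1]
  generalize (∫ s in (1 : ℝ)..t, g s) = I
  simp only [hg]
  rw [hE, hp]
  field_simp
  ring
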